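/- For the polynomials F_j(z) = z_j^{Mm} (for 1 ≤ j ≤ m ≤ n) in ℂ[z_1,…,z_n] and Φ(z) = (z_1 + ⋯ + z_m)^{Mm}, the power Φ^{m-1} does not belong to the ideal generated by F_1, …, F_m. -/

import Mathlib

open MvPolynomial

lemma sum_single_apply {n m : ℕ} (hmn : m ≤ n) (c : Fin m → ℕ) (j : Fin m) :
    (∑ i : Fin m, Finsupp.single (Fin.castLE hmn i) (c i)) (Fin.castLE hmn j) = c j := by
  rw [Finsupp.finset_sum_apply]
  simp [Finsupp.single_apply, Fin.castLE_inj]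

lemma prod_monomial_single {n m : ℕ} (hmn : m ≤ n) (c : Fin m → ℕ) :
    (∏ i : Fin m, (X (Fin.castLE hmn i) : MvPolynomial (Fin n) ℂ) ^ c i) =
      monomial (∑ i : Fin m, Finsupp.single (Fin.castLE hmn i) (c i)) (1 : ℂ) := by
  simp_rw [X_pow_eq_monomial]
  induction (Finset.univ : Finset (Fin m)) using Finset.cons_induction with
  | empty => simp
  | cons a s ha ih =>
      rw [Finset.prod_cons, Finset.sum_cons, ih, monomial_mul, one_mul]

/-- For `F_j = z_j^(M m)` (`1 ≤ j ≤ m ≤ n`) and `Φ = (z_1 + ⋯ + z_m)^(M m)`,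
the power `Φ^(m-1)` does not belong to the ideal `(F_1, …, F_m)`. -/
theorem phi_pow_pred_not_mem_ideal (n m M : ℕ) (hm : 0 < m) (hmn : m ≤ n) (hM : 0 < M) :
    ((∑ i : Fin m, (X (Fin.castLE hmn i) : MvPolynomial (Fin n) ℂ)) ^ (M * m)) ^ (m - 1) ∉
      Ideal.span (Set.range fun j : Fin m =>
        (X (Fin.castLE hmn j) : MvPolynomial (Fin n) ℂ) ^ (M * m)) := by
  classical
  set N := M * (m - 1) with hN
  set d : Fin n →₀ ℕ := ∑ i : Fin m, Finsupp.single (Fin.castLE hmn i) N with hd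
  have hrange : (Set.range fun j : Fin m =>
      (X (Fin.castLE hmn j) : MvPolynomial (Fin n) ℂ) ^ (M * m)) =
      (fun s => monomial s (1:ℂ)) ''
        (Set.range fun j : Fin m => Finsupp.single (Fin.castLE hmn j) (M * m)) := by
    rw [← Set.range_comp]
    apply congrArg Set.range
    funext j
    exact X_pow_eq_monomial
  rw [hrange, mem_ideal_span_monomial_image]
  -- Coefficient of d in Φ^(m-1)
  have hcoeff : coeff d (((∑ i : Fin m, (X (Fin.castLE hmn i) : MvPolynomial (Fin n) ℂ))
      ^ (M * m)) ^ (m - 1)) =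
      (Nat.multinomial Finset.univ (fun _ : Fin m => N) : ℂ) := by
    rw [← pow_mul, Finset.sum_pow_eq_sum_piAntidiag, coeff_sum]
    have hterm : ∀ k : Fin m → ℕ,
        coeff d ((Nat.multinomial Finset.univ k : MvPolynomial (Fin n) ℂ) *
          ∏ i : Fin m, (X (Fin.castLE hmn i) : MvPolynomial (Fin n) ℂ) ^ k i) =
        if (∑ i : Fin m, Finsupp.single (Fin.castLE hmn i) (k i)) = d
          then (Nat.multinomial Finset.univ k : ℂ) else 0 := by
      intro k
      rw [prod_monomial_single hmn, ← map_natCast (C : ℂ →+* MvPolynomial (Fin n) ℂ),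
        C_mul_monomial, mul_one, coeff_monomial]
    rw [Finset.sum_congr rfl fun k _ => hterm k]
    rw [Finset.sum_eq_single_of_mem (fun _ : Fin m => N) ?_ ?_]
    · rw [if_pos hd.symm]
    · rw [Finset.mem_piAntidiag]
      refine ⟨?_, fun i _ => Finset.mem_univ i⟩
      rw [Finset.sum_const, Finset.card_univ, Fintype.card_fin, smul_eq_mul]
      ring
    · intro k _ hk
      rw [if_neg]
      intro heq
      apply hk
      funext j
      have := congrArg (fun f : Fin n →₀ ℕ => f (Fin.castLE hmn j)) heq
      simpa [sum_single_apply hmn, hd] using this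
  intro hmem
  have hdsupp : d ∈ (((∑ i : Fin m, (X (Fin.castLE hmn i) : MvPolynomial (Fin n) ℂ))
      ^ (M * m)) ^ (m - 1)).support := by
    rw [mem_support_iff, hcoeff]
    exact_mod_cast Nat.cast_ne_zero.mpr (Nat.multinomial_pos _ _).ne'
  obtain ⟨si, hsi, hle⟩ := hmem d hdsupp
  obtain ⟨j, rfl⟩ := hsi
  have h1 : M * m ≤ d (Fin.castLE hmn j) := by
    simpa using hle (Fin.castLE hmn j)
  rw [hd, sum_single_apply hmn (fun _ => N) j] at h1
  have h2 : N < M * m := by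
    rw [hN]
    exact Nat.mul_lt_mul_of_pos_left (Nat.sub_lt hm one_pos) hM
  omega
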